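/- The unique root β ≥ 1 of x^(−8) + x^(−8) + x^(−10) + x^(−10) = 1 satisfies β < 1.1092^(3/2), equivalently the induced bound τ(8,8,10,10)^(2/3) < 1.1092. -/

import Mathlib

/-- The root of x^(−8)+x^(−8)+x^(−10)+x^(−10)=1 satisfies β < 1.1092^(3/2),
equivalently τ(8,8,10,10)^(2/3) < 1.1092. -/
theorem tau_8_8_10_10_bound (β : ℝ) (hβ : 1 ≤ β)
    (hroot : β ^ (-(8:ℝ)) + β ^ (-(8:ℝ)) + β ^ (-(10:ℝ)) + β ^ (-(10:ℝ)) = 1) :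
    β < (1.1092 : ℝ) ^ ((3:ℝ)/2) ∧ β ^ ((2:ℝ)/3) < 1.1092 := by
  have hβ0 : (0:ℝ) < β := lt_of_lt_of_le one_pos hβ
  have h8 : β ^ (-(8:ℝ)) = (β ^ (8:ℕ))⁻¹ := by
    rw [Real.rpow_neg hβ0.le]
    congr 1; exact_mod_cast Real.rpow_natCast β 8
  have h10 : β ^ (-(10:ℝ)) = (β ^ (10:ℕ))⁻¹ := by
    rw [Real.rpow_neg hβ0.le]
    congr 1; exact_mod_cast Real.rpow_natCast β 10
  rw [h8, h10] at hroot
  have hne : β ^ (10:ℕ) ≠ 0 := pow_ne_zero _ hβ0.ne'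
  have h18 : (0:ℝ) < β ^ (18:ℕ) := pow_pos hβ0 18
  have hkey : β ^ (10:ℕ) = 2 * β ^ 2 + 2 := by
    field_simp at hroot
    have hz : β ^ (18:ℕ) * (β ^ (10:ℕ) - (2 * β ^ 2 + 2)) = 0 := by
      linear_combination (-β ^ 18) * hroot
    rcases mul_eq_zero.1 hz with h | h
    · exact absurd h h18.ne'
    · linarith
  -- main bound on β^2
  have ht1 : (1:ℝ) ≤ β ^ 2 := by nlinarith
  have hsq : β ^ 2 < (1.1092:ℝ) ^ 3 := by
    by_contra h
    push_neg at h
    have h8' : (1:ℝ) ≤ β ^ 8 := by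
      have := pow_le_pow_left₀ (by norm_num : (0:ℝ) ≤ 1) hβ 8
      simpa using this
    have hfac : (0:ℝ) ≤ (β ^ 2 - (1.1092:ℝ) ^ 3) *
        ((β ^ 2) ^ 4 + (β ^ 2) ^ 3 * (1.1092:ℝ) ^ 3 + (β ^ 2) ^ 2 * ((1.1092:ℝ) ^ 3) ^ 2
          + (β ^ 2) * ((1.1092:ℝ) ^ 3) ^ 3 + ((1.1092:ℝ) ^ 3) ^ 4 - 2) := by
      apply mul_nonneg (by linarith)
      nlinarith [sq_nonneg β, pow_nonneg (sq_nonneg β) 2, pow_nonneg (sq_nonneg β) 3]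
    nlinarith [hfac, hkey]
  have hc0 : (0:ℝ) < (1.1092:ℝ) ^ ((3:ℝ)/2) := Real.rpow_pos_of_pos (by norm_num) _
  have hcsq : ((1.1092:ℝ) ^ ((3:ℝ)/2)) ^ (2:ℕ) = (1.1092:ℝ) ^ (3:ℕ) := by
    rw [← Real.rpow_natCast ((1.1092:ℝ) ^ ((3:ℝ)/2)) 2, ← Real.rpow_natCast (1.1092:ℝ) 3,
      ← Real.rpow_mul (by norm_num)]
    norm_num
  have h1 : β < (1.1092:ℝ) ^ ((3:ℝ)/2) := by
    by_contra h
    push_neg at h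
    have := pow_le_pow_left₀ hc0.le h 2
    rw [hcsq] at this
    linarith
  refine ⟨h1, ?_⟩
  have h2 := Real.rpow_lt_rpow hβ0.le h1 (by norm_num : (0:ℝ) < (2:ℝ)/3)
  rwa [← Real.rpow_mul (by norm_num), show ((3:ℝ)/2) * ((2:ℝ)/3) = 1 by norm_num,
    Real.rpow_one] at h2
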